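/- For integers N ≥ 1 and even w with 0 ≤ w ≤ 2N, the probability P(w) = C(N, w/2) / C(2N, w) that a uniformly random size-w subset of {1,...,2N} consists only of complete pairs {2j-1, 2j} satisfies P(w) ≤ (e·w/(2N))^(w/2). -/

import Mathlib

lemma pow_le_pow_mul_choose : ∀ (k n : ℕ), k ≤ n → n ^ k ≤ k ^ k * n.choose k := by
  intro k
  induction k with
  | zero => simp
  | succ k ih =>
    intro n hn
    obtain ⟨m, rfl⟩ : ∃ m, n = m + 1 := ⟨n - 1, by omega⟩
    have hk : k ≤ m := by omega
    have claimA : (m + 1) ^ k ≤ (k + 1) ^ k * m.choose k := by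
      rcases Nat.eq_zero_or_pos k with rfl | hkpos
      · simp
      · have h1 : k ^ k * (m + 1) ^ k ≤ k ^ k * ((k + 1) ^ k * m.choose k) := by
          calc k ^ k * (m + 1) ^ k = (k * (m + 1)) ^ k := by rw [mul_pow]
            _ ≤ ((k + 1) * m) ^ k := Nat.pow_le_pow_left (by nlinarith) k
            _ = (k + 1) ^ k * m ^ k := by rw [mul_pow]
            _ ≤ (k + 1) ^ k * (k ^ k * m.choose k) := Nat.mul_le_mul_left _ (ih m hk)
            _ = k ^ k * ((k + 1) ^ k * m.choose k) := by ring
        exact Nat.le_of_mul_le_mul_left h1 (Nat.pow_pos hkpos)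
    have hsucc : (m + 1) * m.choose k = (m + 1).choose (k + 1) * (k + 1) :=
      Nat.add_one_mul_choose_eq m k
    have key : (m + 1) ^ (k + 1) * (k + 1) ≤ (k + 1) ^ (k + 1) * (m + 1).choose (k + 1) * (k + 1) := by
      calc (m + 1) ^ (k + 1) * (k + 1) = (m + 1) ^ k * ((m + 1) * (k + 1)) := by ring
        _ ≤ (k + 1) ^ k * m.choose k * ((m + 1) * (k + 1)) :=
            Nat.mul_le_mul_right _ claimA
        _ = (k + 1) ^ k * ((m + 1) * m.choose k) * (k + 1) := by ring
        _ = (k + 1) ^ k * ((m + 1).choose (k + 1) * (k + 1)) * (k + 1) := by rw [hsucc]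
        _ = (k + 1) ^ (k + 1) * (m + 1).choose (k + 1) * (k + 1) := by ring
    exact Nat.le_of_mul_le_mul_right key (Nat.succ_pos k)

theorem paired_prob_upper_bound (N w : ℕ) (hN : 1 ≤ N) (hw : Even w)
    (hw2 : w ≤ 2 * N) :
    ((N.choose (w / 2) : ℝ) / ((2 * N).choose w : ℝ)) ≤
      (Real.exp 1 * w / (2 * N)) ^ (w / 2) := by
  obtain ⟨k, rfl⟩ : ∃ k, w = 2 * k := by
    obtain ⟨j, hj⟩ := hw; exact ⟨j, by omega⟩
  have hk2 : 2 * k / 2 = k := by omega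
  rw [hk2]
  have hkN : k ≤ N := by omega
  set e := Real.exp 1 with he
  set C2 : ℝ := ((2 * N).choose (2 * k) : ℝ) with hC2
  have hC2pos : (0 : ℝ) < C2 := by rw [hC2]; exact_mod_cast Nat.choose_pos hw2
  rw [div_le_iff₀ hC2pos]
  have hNpos : (0 : ℝ) < (N : ℝ) := by exact_mod_cast hN
  have hfpos : (0 : ℝ) < (k.factorial : ℝ) := by exact_mod_cast k.factorial_pos
  have hkkpos : (0 : ℝ) < (k : ℝ) ^ k := by
    rcases Nat.eq_zero_or_pos k with rfl | h
    · simp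
    · positivity
  have hcpos : (0 : ℝ) < (2 * (k : ℝ)) ^ k := by
    rcases Nat.eq_zero_or_pos k with rfl | h
    · simp
    · have : (0:ℝ) < (k:ℝ) := by exact_mod_cast h
      positivity
  have hn2pos : (0 : ℝ) < (2 * (N : ℝ)) ^ k := by positivity
  -- h1' : choose * k! ≤ N^k
  have h1' : (N.choose k : ℝ) * (k.factorial : ℝ) ≤ (N : ℝ) ^ k := by
    have := Nat.choose_le_pow_div (α := ℝ) k N
    rw [le_div_iff₀ hfpos] at this
    exact this
  -- h2' : (2N)^k * (2N)^k ≤ (2k)^k * (2k)^k * C2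
  have h2' : (2 * (N : ℝ)) ^ k * (2 * (N : ℝ)) ^ k ≤
      (2 * (k : ℝ)) ^ k * (2 * (k : ℝ)) ^ k * C2 := by
    have := pow_le_pow_mul_choose (2 * k) (2 * N) hw2
    have h2 : (2 * (N : ℝ)) ^ (2 * k) ≤ (2 * (k : ℝ)) ^ (2 * k) * C2 := by
      rw [hC2]; exact_mod_cast this
    rw [show 2 * k = k + k from two_mul k, pow_add, pow_add] at h2
    linarith [h2]
  -- h3' : k^k ≤ e^k * k!
  have h3' : (k : ℝ) ^ k ≤ e ^ k * (k.factorial : ℝ) := by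
    have h3 := Real.pow_div_factorial_le_exp (x := (k : ℝ)) (Nat.cast_nonneg k) k
    rw [div_le_iff₀ hfpos] at h3
    rw [he, Real.exp_one_pow]
    exact h3
  -- key identity : N^k * (2k)^k = k^k * (2N)^k
  have hid : (N : ℝ) ^ k * (2 * (k : ℝ)) ^ k = (k : ℝ) ^ k * (2 * (N : ℝ)) ^ k := by
    rw [← mul_pow, ← mul_pow]; ring_nf
  -- rewrite RHS
  push_cast
  rw [div_pow, mul_pow, div_mul_eq_mul_div, le_div_iff₀ hn2pos]
  -- goal : ↑(N.choose k) * (2N)^k ≤ e^k * (2k)^k * C2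
  have hmul : (0 : ℝ) < (2 * (k : ℝ)) ^ k * (k.factorial : ℝ) := mul_pos hcpos hfpos
  refine le_of_mul_le_mul_right ?_ hmul
  have hepos : (0 : ℝ) ≤ e ^ k := by positivity
  calc (N.choose k : ℝ) * (2 * (N : ℝ)) ^ k * ((2 * (k : ℝ)) ^ k * (k.factorial : ℝ))
      = ((N.choose k : ℝ) * (k.factorial : ℝ)) * ((2 * (N : ℝ)) ^ k * (2 * (k : ℝ)) ^ k) := by
        ring
    _ ≤ (N : ℝ) ^ k * ((2 * (N : ℝ)) ^ k * (2 * (k : ℝ)) ^ k) := by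
        apply mul_le_mul_of_nonneg_right h1'
        positivity
    _ = ((N : ℝ) ^ k * (2 * (k : ℝ)) ^ k) * (2 * (N : ℝ)) ^ k := by ring
    _ = (k : ℝ) ^ k * ((2 * (N : ℝ)) ^ k * (2 * (N : ℝ)) ^ k) := by rw [hid]; ring
    _ ≤ (k : ℝ) ^ k * ((2 * (k : ℝ)) ^ k * (2 * (k : ℝ)) ^ k * C2) := by
        apply mul_le_mul_of_nonneg_left h2' (le_of_lt hkkpos)
    _ ≤ (e ^ k * (k.factorial : ℝ)) * ((2 * (k : ℝ)) ^ k * (2 * (k : ℝ)) ^ k * C2) := by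
        apply mul_le_mul_of_nonneg_right h3'
        positivity
    _ = e ^ k * (2 * (k : ℝ)) ^ k * C2 * ((2 * (k : ℝ)) ^ k * (k.factorial : ℝ)) := by ring
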